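/- Let Γ : [0,1]ⁿ → [0,1]ⁿ with Γᵢ(P) = Φ(cᵢ + α·Vᵢ(P)), Vᵢ(P) = (1/|Fᵢ|)Σ_{j∈Fᵢ}Pⱼ, and 0 ≤ α < √(2π). If α ≥ 0 and c ≤ c' coordinatewise, then the unique fixed points satisfy P*(c) ≤ P*(c') coordinatewise. -/

import Mathlib

open MeasureTheory Real Filter

noncomputable def stdGaussianPDF (x : ℝ) : ℝ :=
  (Real.sqrt (2 * Real.pi))⁻¹ * Real.exp (-x ^ 2 / 2)

noncomputable def stdGaussianCDF (x : ℝ) : ℝ := ∫ t in Set.Iic x, stdGaussianPDF t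

lemma sqrt2pi_pos : 0 < Real.sqrt (2 * Real.pi) :=
  Real.sqrt_pos.2 (by positivity)

lemma stdGaussianPDF_nonneg (x : ℝ) : 0 ≤ stdGaussianPDF x := by
  unfold stdGaussianPDF; positivity

lemma stdGaussianPDF_le (x : ℝ) : stdGaussianPDF x ≤ (Real.sqrt (2 * Real.pi))⁻¹ := by
  unfold stdGaussianPDF
  calc (Real.sqrt (2 * Real.pi))⁻¹ * Real.exp (-x ^ 2 / 2)
      ≤ (Real.sqrt (2 * Real.pi))⁻¹ * 1 := by
        apply mul_le_mul_of_nonneg_left _ (by positivity)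
        rw [← Real.exp_zero]
        exact Real.exp_le_exp.2 (by nlinarith [sq_nonneg x])
    _ = (Real.sqrt (2 * Real.pi))⁻¹ := mul_one _

lemma stdGaussianPDF_integrable : Integrable stdGaussianPDF := by
  have h : Integrable (fun x : ℝ => Real.exp (-(1/2 : ℝ) * x ^ 2)) :=
    integrable_exp_neg_mul_sq (by norm_num)
  have := h.const_mul (Real.sqrt (2 * Real.pi))⁻¹
  convert this using 2 with x
  unfold stdGaussianPDF
  ring_nf

lemma stdGaussianCDF_sub_le {a b : ℝ} (hab : a ≤ b) :
    stdGaussianCDF b - stdGaussianCDF a ≤ (b - a) / Real.sqrt (2 * Real.pi) := by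
  unfold stdGaussianCDF
  rw [intervalIntegral.integral_Iic_sub_Iic stdGaussianPDF_integrable.integrableOn
    stdGaussianPDF_integrable.integrableOn, intervalIntegral.integral_of_le hab]
  calc ∫ t in Set.Ioc a b, stdGaussianPDF t
      ≤ ∫ _ in Set.Ioc a b, (Real.sqrt (2 * Real.pi))⁻¹ := by
        apply setIntegral_mono_on stdGaussianPDF_integrable.integrableOn
          (integrableOn_const measure_Ioc_lt_top.ne) measurableSet_Ioc
        intro x _
        exact stdGaussianPDF_le x
    _ = (b - a) / Real.sqrt (2 * Real.pi) := by
        rw [setIntegral_const, measureReal_def, Real.volume_Ioc, ENNReal.toReal_ofReal (by linarith)]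
        rw [smul_eq_mul, div_eq_mul_inv]

lemma stdGaussianCDF_mono : Monotone stdGaussianCDF := by
  intro a b hab
  unfold stdGaussianCDF
  apply setIntegral_mono_set stdGaussianPDF_integrable.integrableOn
    (Eventually.of_forall fun x => stdGaussianPDF_nonneg x)
  exact HasSubset.Subset.eventuallyLE (Set.Iic_subset_Iic.2 hab)

theorem equilibrium_monotone_comparative_statics (n : ℕ) (α : ℝ)
    (hα0 : 0 ≤ α) (hα : α < Real.sqrt (2 * Real.pi))
    (F : Fin n → Finset (Fin n)) (hF : ∀ i, (F i).Nonempty)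
    (c c' : Fin n → ℝ) (hcc : ∀ i, c i ≤ c' i)
    (P Q : Fin n → ℝ)
    (hP : ∀ i, P i = stdGaussianCDF (c i + α * ((∑ j ∈ F i, P j) / (F i).card)))
    (hQ : ∀ i, Q i = stdGaussianCDF (c' i + α * ((∑ j ∈ F i, Q j) / (F i).card))) :
    ∀ i, P i ≤ Q i := by
  intro i
  have hne : Nonempty (Fin n) := ⟨i⟩
  obtain ⟨i₀, -, hmax⟩ := Finset.exists_max_image Finset.univ (fun j => P j - Q j)
    ⟨i, Finset.mem_univ i⟩
  set d := P i₀ - Q i₀ with hd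
  suffices hD : d ≤ 0 by
    have := hmax i (Finset.mem_univ i); linarith
  by_contra hneg
  push_neg at hneg
  set x := c i₀ + α * ((∑ j ∈ F i₀, P j) / (F i₀).card) with hx
  set y := c' i₀ + α * ((∑ j ∈ F i₀, Q j) / (F i₀).card) with hy
  have hcard : (0 : ℝ) < (F i₀).card := by
    exact_mod_cast Finset.card_pos.2 (hF i₀)
  have hsum : (∑ j ∈ F i₀, P j) / (F i₀).card - (∑ j ∈ F i₀, Q j) / (F i₀).card ≤ d := by
    rw [div_sub_div_same, ← Finset.sum_sub_distrib, div_le_iff₀ hcard]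
    calc ∑ j ∈ F i₀, (P j - Q j) ≤ ∑ _j ∈ F i₀, d :=
          Finset.sum_le_sum fun j _ => hmax j (Finset.mem_univ j)
      _ = d * (F i₀).card := by rw [Finset.sum_const, nsmul_eq_mul, mul_comm]
  have hxy : x - y ≤ α * d := by
    have := hcc i₀
    have h2 : α * ((∑ j ∈ F i₀, P j) / (F i₀).card) - α * ((∑ j ∈ F i₀, Q j) / (F i₀).card)
        ≤ α * d := by
      rw [← mul_sub]
      exact mul_le_mul_of_nonneg_left hsum hα0
    simp only [hx, hy]; linarith
  have hdxy : d = stdGaussianCDF x - stdGaussianCDF y := by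
    rw [hd, hP i₀, hQ i₀]
  rcases le_or_gt x y with h | h
  · have := stdGaussianCDF_mono h; linarith
  · have hle := stdGaussianCDF_sub_le h.le
    have : d ≤ (x - y) / Real.sqrt (2 * Real.pi) := by
      rw [hdxy]; exact hle
    have hfin : d ≤ α * d / Real.sqrt (2 * Real.pi) :=
      this.trans (by gcongr)
    have : α * d / Real.sqrt (2 * Real.pi) < d := by
      rw [div_lt_iff₀ sqrt2pi_pos]
      calc α * d < Real.sqrt (2 * Real.pi) * d := by
            exact mul_lt_mul_of_pos_right hα hneg
        _ = d * Real.sqrt (2 * Real.pi) := mul_comm _ _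
    linarith
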